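/- Let λ ∈ ℝ and let (q,u,p), with q ∈ C¹([t₁−τ,t₂], ℝⁿ), u ∈ C¹([t₁−τ,t₂], ℝᵐ), p ∈ C¹([t₁,t₂], ℝⁿ), be an isoperimetric Pontryagin extremal with time delay, i.e. with H[q,u,p,λ]_τ(t) := L[q,u]_τ(t) − λ·g[q,u]_τ(t) + p(t)·φ[q,u]_τ(t) it satisfies: q̇(t) = ∂₆H[q,u,p,λ]_τ(t) on [t₁,t₂]; ṗ(t) = −∂₂H[q,u,p,λ]_τ(t) − ∂₄H[q,u,p,λ]_τ(t+τ) and ∂₃H[q,u,p,λ]_τ(t) + ∂₅H[q,u,p,λ]_τ(t+τ) = 0 on [t₁,t₂−τ]; and ṗ(t) = −∂₂H[q,u,p,λ]_τ(t) and ∂₃H[q,u,p,λ]_τ(t) = 0 on [t₂−τ,t₂]. Suppose moreover that ∂₄H[q,u,p,λ]_τ(t+τ)·q̇(t) + ∂₅H[q,u,p,λ]_τ(t+τ)·u̇(t) = 0 for all t ∈ [t₁−τ, t₂−τ]. Then d/dt H[q,u,p,λ]_τ(t) = ∂₁H[q,u,p,λ]_τ(t) for all t ∈ [t₁, t₂].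 -/

import Mathlib

open Set MeasureTheory RealInnerProductSpace

noncomputable section

/-- `ℝⁿ` as a Euclidean space. -/
abbrev Vec (n : ℕ) := EuclideanSpace ℝ (Fin n)

/-- The type of integrands/dynamics `f(t, q, u, q_τ, u_τ)` with values in `α`. -/
abbrev CF (n m : ℕ) (α : Type) := ℝ → Vec n → Vec m → Vec n → Vec m → α

/-- The type of Hamiltonians `H(t, q, u, q_τ, u_τ, p)`. -/
abbrev HamT (n m : ℕ) := ℝ → Vec n → Vec m → Vec n → Vec m → Vec n → ℝ

/-- The isoperimetric Hamiltonian `H = L - λ·g + p·φ`. -/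
def Ham {n m : ℕ} (L g : CF n m ℝ) (φ : CF n m (Vec n)) (lam : ℝ) : HamT n m :=
  fun t a b c d p => L t a b c d - lam * g t a b c d + ⟪p, φ t a b c d⟫

/-- `∂₁H[q,u,p,λ]_τ(t)` (derivative w.r.t. the time slot), evaluated along
`(t, q(t), u(t), q(t-τ), u(t-τ), p(t))`. -/
def dH1 {n m : ℕ} (H : HamT n m) (τ : ℝ) (q : ℝ → Vec n) (u : ℝ → Vec m)
    (p : ℝ → Vec n) (t : ℝ) : ℝ :=
  deriv (fun s => H s (q t) (u t) (q (t - τ)) (u (t - τ)) (p t)) t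

/-- `∂₂H[q,u,p,λ]_τ(t)` (gradient w.r.t. the state slot). -/
def dH2 {n m : ℕ} (H : HamT n m) (τ : ℝ) (q : ℝ → Vec n) (u : ℝ → Vec m)
    (p : ℝ → Vec n) (t : ℝ) : Vec n :=
  gradient (fun y => H t y (u t) (q (t - τ)) (u (t - τ)) (p t)) (q t)

/-- `∂₃H[q,u,p,λ]_τ(t)` (gradient w.r.t. the control slot). -/
def dH3 {n m : ℕ} (H : HamT n m) (τ : ℝ) (q : ℝ → Vec n) (u : ℝ → Vec m)
    (p : ℝ → Vec n) (t : ℝ) : Vec m :=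
  gradient (fun v => H t (q t) v (q (t - τ)) (u (t - τ)) (p t)) (u t)

/-- `∂₄H[q,u,p,λ]_τ(t)` (gradient w.r.t. the delayed state slot). -/
def dH4 {n m : ℕ} (H : HamT n m) (τ : ℝ) (q : ℝ → Vec n) (u : ℝ → Vec m)
    (p : ℝ → Vec n) (t : ℝ) : Vec n :=
  gradient (fun y => H t (q t) (u t) y (u (t - τ)) (p t)) (q (t - τ))

/-- `∂₅H[q,u,p,λ]_τ(t)` (gradient w.r.t. the delayed control slot). -/
def dH5 {n m : ℕ} (H : HamT n m) (τ : ℝ) (q : ℝ → Vec n) (u : ℝ → Vec m)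
    (p : ℝ → Vec n) (t : ℝ) : Vec m :=
  gradient (fun v => H t (q t) (u t) (q (t - τ)) v (p t)) (u (t - τ))

/-- `∂₆H[q,u,p,λ]_τ(t)` (gradient w.r.t. the costate slot). -/
def dH6 {n m : ℕ} (H : HamT n m) (τ : ℝ) (q : ℝ → Vec n) (u : ℝ → Vec m)
    (p : ℝ → Vec n) (t : ℝ) : Vec n :=
  gradient (fun pp => H t (q t) (u t) (q (t - τ)) (u (t - τ)) pp) (p t)

/-- `H[q,u,p,λ]_τ(t)`: the Hamiltonian evaluated along the delayed process. -/
def hamAlong {n m : ℕ} (H : HamT n m) (τ : ℝ) (q : ℝ → Vec n) (u : ℝ → Vec m)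
    (p : ℝ → Vec n) (t : ℝ) : ℝ :=
  H t (q t) (u t) (q (t - τ)) (u (t - τ)) (p t)

/-- `f` is `C¹` in all of its arguments (jointly). -/
def CF_C1 {n m : ℕ} {α : Type} [NormedAddCommGroup α] [NormedSpace ℝ α]
    (f : CF n m α) : Prop :=
  ContDiff ℝ 1 (fun p : ℝ × Vec n × Vec m × Vec n × Vec m =>
    f p.1 p.2.1 p.2.2.1 p.2.2.2.1 p.2.2.2.2)

/-- Auxiliary tuple type. -/
abbrev ETup (n m : ℕ) := ℝ × Vec n × Vec m × Vec n × Vec m × Vec n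

lemma inner_gradient_eq' {F : Type*} [NormedAddCommGroup F] [InnerProductSpace ℝ F]
    [CompleteSpace F] {f : F → ℝ} {ℓ : F →L[ℝ] ℝ} {x : F} (h : HasFDerivAt f ℓ x) (w : F) :
    ⟪gradient f x, w⟫ = ℓ w := by
  rw [(hasFDerivAt_iff_hasGradientAt.mp h).gradient, InnerProductSpace.toDual_symm_apply]

/-- DuBois–Reymond condition `dH/dt = ∂H/∂t` for isoperimetric
Pontryagin extremals with time delay. -/
theorem hamiltonian_duBois_Reymond_with_time_delay
    {n m : ℕ} (hn : 0 < n) (hm : 0 < m) (t₁ t₂ τ : ℝ) (ht : t₁ < t₂)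
    (hτ : 0 < τ) (hτ' : τ < t₂ - t₁)
    (L g : CF n m ℝ) (φ : CF n m (Vec n))
    (hL : CF_C1 L) (hg : CF_C1 g) (hφ : CF_C1 φ) (lam : ℝ)
    (q : ℝ → Vec n) (u : ℝ → Vec m) (p : ℝ → Vec n)
    (hq : ContDiff ℝ 1 q) (hu : ContDiff ℝ 1 u) (hp : ContDiff ℝ 1 p)
    -- (q, u, p) is an isoperimetric Pontryagin extremal with time delay:
    (hq' : ∀ t ∈ Icc t₁ t₂, deriv q t = dH6 (Ham L g φ lam) τ q u p t)
    (hp₁ : ∀ t ∈ Icc t₁ (t₂ - τ),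
      deriv p t = -(dH2 (Ham L g φ lam) τ q u p t)
        - dH4 (Ham L g φ lam) τ q u p (t + τ))
    (hst₁ : ∀ t ∈ Icc t₁ (t₂ - τ),
      dH3 (Ham L g φ lam) τ q u p t + dH5 (Ham L g φ lam) τ q u p (t + τ) = 0)
    (hp₂ : ∀ t ∈ Icc (t₂ - τ) t₂,
      deriv p t = -(dH2 (Ham L g φ lam) τ q u p t))
    (hst₂ : ∀ t ∈ Icc (t₂ - τ) t₂, dH3 (Ham L g φ lam) τ q u p t = 0)
    -- the extra condition on the delayed terms:
    (hcond : ∀ t ∈ Icc (t₁ - τ) (t₂ - τ),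
      ⟪dH4 (Ham L g φ lam) τ q u p (t + τ), deriv q t⟫
        + ⟪dH5 (Ham L g φ lam) τ q u p (t + τ), deriv u t⟫ = 0) :
    ∀ t ∈ Icc t₁ t₂,
      deriv (hamAlong (Ham L g φ lam) τ q u p) t
        = dH1 (Ham L g φ lam) τ q u p t := by
  intro t ht
  set Hm := Ham L g φ lam with hHm
  let F : ETup n m → ℝ := fun z => Hm z.1 z.2.1 z.2.2.1 z.2.2.2.1 z.2.2.2.2.1 z.2.2.2.2.2
  have hproj : ContDiff ℝ 1 (fun z : ETup n m =>
      ((z.1, z.2.1, z.2.2.1, z.2.2.2.1, z.2.2.2.2.1) : ℝ × Vec n × Vec m × Vec n × Vec m)) := by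
    fun_prop
  have hF : ContDiff ℝ 1 F := by
    have h1 : ContDiff ℝ 1 (fun z : ETup n m => L z.1 z.2.1 z.2.2.1 z.2.2.2.1 z.2.2.2.2.1) :=
      hL.comp hproj
    have h2 : ContDiff ℝ 1 (fun z : ETup n m => g z.1 z.2.1 z.2.2.1 z.2.2.2.1 z.2.2.2.2.1) :=
      hg.comp hproj
    have h3 : ContDiff ℝ 1 (fun z : ETup n m => φ z.1 z.2.1 z.2.2.1 z.2.2.2.1 z.2.2.2.2.1) :=
      hφ.comp hproj
    have h4 : ContDiff ℝ 1 (fun z : ETup n m => (z.2.2.2.2.2 : Vec n)) := by fun_prop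
    exact (h1.sub (contDiff_const.mul h2)).add (ContDiff.inner ℝ h4 h3)
  have hFd : Differentiable ℝ F := hF.differentiable one_ne_zero
  have hqd : Differentiable ℝ q := hq.differentiable one_ne_zero
  have hud : Differentiable ℝ u := hu.differentiable one_ne_zero
  have hpd : Differentiable ℝ p := hp.differentiable one_ne_zero
  have hqτ : HasDerivAt (fun s => q (s - τ)) (deriv q (t - τ)) t := by
    simpa [Function.comp_def] using ((hqd (t - τ)).hasDerivAt).scomp t ((hasDerivAt_id t).sub_const τ)
  have huτ : HasDerivAt (fun s => u (s - τ)) (deriv u (t - τ)) t := by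
    simpa [Function.comp_def] using ((hud (t - τ)).hasDerivAt).scomp t ((hasDerivAt_id t).sub_const τ)
  have hγ : HasDerivAt (fun s => ((s, q s, u s, q (s - τ), u (s - τ), p s) : ETup n m))
      ((1, deriv q t, deriv u t, deriv q (t - τ), deriv u (t - τ), deriv p t) : ETup n m) t :=
    (hasDerivAt_id t).prodMk ((hqd t).hasDerivAt.prodMk ((hud t).hasDerivAt.prodMk
      (hqτ.prodMk (huτ.prodMk (hpd t).hasDerivAt))))
  set z : ETup n m := (t, q t, u t, q (t - τ), u (t - τ), p t) with hz
  set ℓ := fderiv ℝ F z with hℓ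
  have key : HasDerivAt (hamAlong Hm τ q u p)
      (ℓ ((1, deriv q t, deriv u t, deriv q (t - τ), deriv u (t - τ), deriv p t) : ETup n m)) t := by
    have := (hFd z).hasFDerivAt.comp_hasDerivAt t hγ; exact this
  rw [key.deriv]
  -- decompose into six pieces
  have hdec : ℓ ((1, deriv q t, deriv u t, deriv q (t - τ), deriv u (t - τ), deriv p t) : ETup n m)
      = ℓ ((1, 0, 0, 0, 0, 0) : ETup n m) + ℓ ((0, deriv q t, 0, 0, 0, 0) : ETup n m)
        + ℓ ((0, 0, deriv u t, 0, 0, 0) : ETup n m)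
        + ℓ ((0, 0, 0, deriv q (t - τ), 0, 0) : ETup n m)
        + ℓ ((0, 0, 0, 0, deriv u (t - τ), 0) : ETup n m)
        + ℓ ((0, 0, 0, 0, 0, deriv p t) : ETup n m) := by
    have hv : ((1, deriv q t, deriv u t, deriv q (t - τ), deriv u (t - τ), deriv p t) : ETup n m)
        = ((1, 0, 0, 0, 0, 0) : ETup n m) + ((0, deriv q t, 0, 0, 0, 0) : ETup n m)
          + ((0, 0, deriv u t, 0, 0, 0) : ETup n m)
          + ((0, 0, 0, deriv q (t - τ), 0, 0) : ETup n m)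
          + ((0, 0, 0, 0, deriv u (t - τ), 0) : ETup n m)
          + ((0, 0, 0, 0, 0, deriv p t) : ETup n m) := by
      simp [Prod.ext_iff]
    rw [hv, map_add, map_add, map_add, map_add, map_add]
  -- slot 1
  have e1 : dH1 Hm τ q u p t = ℓ ((1, 0, 0, 0, 0, 0) : ETup n m) := by
    have hinc : HasDerivAt (fun s : ℝ => ((s, q t, u t, q (t - τ), u (t - τ), p t) : ETup n m))
        ((1, 0, 0, 0, 0, 0) : ETup n m) t :=
      (hasDerivAt_id t).prodMk ((hasDerivAt_const t _).prodMk ((hasDerivAt_const t _).prodMk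
        ((hasDerivAt_const t _).prodMk ((hasDerivAt_const t _).prodMk (hasDerivAt_const t _)))))
    exact ((hFd z).hasFDerivAt.comp_hasDerivAt t hinc).deriv
  -- slot 2
  have e2 : ∀ w : Vec n, ⟪dH2 Hm τ q u p t, w⟫ = ℓ ((0, w, 0, 0, 0, 0) : ETup n m) := by
    intro w
    have hinc : HasFDerivAt (fun y : Vec n => ((t, y, u t, q (t - τ), u (t - τ), p t) : ETup n m))
        (((0 : Vec n →L[ℝ] ℝ)).prod ((ContinuousLinearMap.id ℝ (Vec n)).prod
          (((0 : Vec n →L[ℝ] Vec m)).prod (((0 : Vec n →L[ℝ] Vec n)).prod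
          (((0 : Vec n →L[ℝ] Vec m)).prod (0 : Vec n →L[ℝ] Vec n)))))) (q t) :=
      (hasFDerivAt_const _ _).prodMk ((hasFDerivAt_id _).prodMk ((hasFDerivAt_const _ _).prodMk
        ((hasFDerivAt_const _ _).prodMk ((hasFDerivAt_const _ _).prodMk (hasFDerivAt_const _ _)))))
    have h := inner_gradient_eq' ((hFd z).hasFDerivAt.comp (q t) hinc) w
    simp only [ContinuousLinearMap.comp_apply, ContinuousLinearMap.prod_apply, ContinuousLinearMap.zero_apply, ContinuousLinearMap.id_apply] at h
    exact h
  -- slot 3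
  have e3 : ∀ w : Vec m, ⟪dH3 Hm τ q u p t, w⟫ = ℓ ((0, 0, w, 0, 0, 0) : ETup n m) := by
    intro w
    have hinc : HasFDerivAt (fun v : Vec m => ((t, q t, v, q (t - τ), u (t - τ), p t) : ETup n m))
        (((0 : Vec m →L[ℝ] ℝ)).prod (((0 : Vec m →L[ℝ] Vec n)).prod
          ((ContinuousLinearMap.id ℝ (Vec m)).prod (((0 : Vec m →L[ℝ] Vec n)).prod
          (((0 : Vec m →L[ℝ] Vec m)).prod (0 : Vec m →L[ℝ] Vec n)))))) (u t) :=
      (hasFDerivAt_const _ _).prodMk ((hasFDerivAt_const _ _).prodMk ((hasFDerivAt_id _).prodMk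
        ((hasFDerivAt_const _ _).prodMk ((hasFDerivAt_const _ _).prodMk (hasFDerivAt_const _ _)))))
    have h := inner_gradient_eq' ((hFd z).hasFDerivAt.comp (u t) hinc) w
    simp only [ContinuousLinearMap.comp_apply, ContinuousLinearMap.prod_apply, ContinuousLinearMap.zero_apply, ContinuousLinearMap.id_apply] at h
    exact h
  -- slot 4
  have e4 : ∀ w : Vec n, ⟪dH4 Hm τ q u p t, w⟫ = ℓ ((0, 0, 0, w, 0, 0) : ETup n m) := by
    intro w
    have hinc : HasFDerivAt (fun y : Vec n => ((t, q t, u t, y, u (t - τ), p t) : ETup n m))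
        (((0 : Vec n →L[ℝ] ℝ)).prod (((0 : Vec n →L[ℝ] Vec n)).prod
          (((0 : Vec n →L[ℝ] Vec m)).prod ((ContinuousLinearMap.id ℝ (Vec n)).prod
          (((0 : Vec n →L[ℝ] Vec m)).prod (0 : Vec n →L[ℝ] Vec n)))))) (q (t - τ)) :=
      (hasFDerivAt_const _ _).prodMk ((hasFDerivAt_const _ _).prodMk ((hasFDerivAt_const _ _).prodMk
        ((hasFDerivAt_id _).prodMk ((hasFDerivAt_const _ _).prodMk (hasFDerivAt_const _ _)))))
    have h := inner_gradient_eq' ((hFd z).hasFDerivAt.comp (q (t - τ)) hinc) w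
    simp only [ContinuousLinearMap.comp_apply, ContinuousLinearMap.prod_apply, ContinuousLinearMap.zero_apply, ContinuousLinearMap.id_apply] at h
    exact h
  -- slot 5
  have e5 : ∀ w : Vec m, ⟪dH5 Hm τ q u p t, w⟫ = ℓ ((0, 0, 0, 0, w, 0) : ETup n m) := by
    intro w
    have hinc : HasFDerivAt (fun v : Vec m => ((t, q t, u t, q (t - τ), v, p t) : ETup n m))
        (((0 : Vec m →L[ℝ] ℝ)).prod (((0 : Vec m →L[ℝ] Vec n)).prod
          (((0 : Vec m →L[ℝ] Vec m)).prod (((0 : Vec m →L[ℝ] Vec n)).prod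
          ((ContinuousLinearMap.id ℝ (Vec m)).prod (0 : Vec m →L[ℝ] Vec n)))))) (u (t - τ)) :=
      (hasFDerivAt_const _ _).prodMk ((hasFDerivAt_const _ _).prodMk ((hasFDerivAt_const _ _).prodMk
        ((hasFDerivAt_const _ _).prodMk ((hasFDerivAt_id _).prodMk (hasFDerivAt_const _ _)))))
    have h := inner_gradient_eq' ((hFd z).hasFDerivAt.comp (u (t - τ)) hinc) w
    simp only [ContinuousLinearMap.comp_apply, ContinuousLinearMap.prod_apply, ContinuousLinearMap.zero_apply, ContinuousLinearMap.id_apply] at h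
    exact h
  -- slot 6
  have e6 : ∀ w : Vec n, ⟪dH6 Hm τ q u p t, w⟫ = ℓ ((0, 0, 0, 0, 0, w) : ETup n m) := by
    intro w
    have hinc : HasFDerivAt (fun pp : Vec n => ((t, q t, u t, q (t - τ), u (t - τ), pp) : ETup n m))
        (((0 : Vec n →L[ℝ] ℝ)).prod (((0 : Vec n →L[ℝ] Vec n)).prod
          (((0 : Vec n →L[ℝ] Vec m)).prod (((0 : Vec n →L[ℝ] Vec n)).prod
          (((0 : Vec n →L[ℝ] Vec m)).prod (ContinuousLinearMap.id ℝ (Vec n))))))) (p t) :=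
      (hasFDerivAt_const _ _).prodMk ((hasFDerivAt_const _ _).prodMk ((hasFDerivAt_const _ _).prodMk
        ((hasFDerivAt_const _ _).prodMk ((hasFDerivAt_const _ _).prodMk (hasFDerivAt_id _)))))
    have h := inner_gradient_eq' ((hFd z).hasFDerivAt.comp (p t) hinc) w
    simp only [ContinuousLinearMap.comp_apply, ContinuousLinearMap.prod_apply, ContinuousLinearMap.zero_apply, ContinuousLinearMap.id_apply] at h
    exact h
  rw [hdec, ← e1, ← e2 (deriv q t), ← e3 (deriv u t), ← e4 (deriv q (t - τ)),
    ← e5 (deriv u (t - τ)), ← e6 (deriv p t)]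
  -- now pure algebra
  have hA := hq' t ht
  have hE := hcond (t - τ) ⟨by linarith [ht.1], by linarith [ht.2]⟩
  rw [sub_add_cancel] at hE
  rcases le_total t (t₂ - τ) with hle | hle
  · have hB := hp₁ t ⟨ht.1, hle⟩
    have hC := hst₁ t ⟨ht.1, hle⟩
    have hD := hcond t ⟨by linarith [ht.1], hle⟩
    have h3 : dH3 Hm τ q u p t = -(dH5 Hm τ q u p (t + τ)) :=
      eq_neg_of_add_eq_zero_left hC
    have expand : ⟪dH2 Hm τ q u p t, deriv q t⟫ + ⟪dH3 Hm τ q u p t, deriv u t⟫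
        + ⟪dH4 Hm τ q u p t, deriv q (t - τ)⟫ + ⟪dH5 Hm τ q u p t, deriv u (t - τ)⟫
        + ⟪dH6 Hm τ q u p t, deriv p t⟫ = 0 := by
      rw [hA, hB, h3]
      simp only [inner_sub_right, inner_neg_right, inner_neg_left]
      have c1 : ⟪dH2 Hm τ q u p t, dH6 Hm τ q u p t⟫
          = ⟪dH6 Hm τ q u p t, dH2 Hm τ q u p t⟫ := real_inner_comm _ _
      have c2 : ⟪dH6 Hm τ q u p t, dH4 Hm τ q u p (t + τ)⟫
          = ⟪dH4 Hm τ q u p (t + τ), dH6 Hm τ q u p t⟫ := real_inner_comm _ _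
      rw [hA] at hD
      linarith [hE, hD, c1, c2]
    linarith [expand]
  · have hB := hp₂ t ⟨hle, ht.2⟩
    have hC := hst₂ t ⟨hle, ht.2⟩
    have expand : ⟪dH2 Hm τ q u p t, deriv q t⟫ + ⟪dH3 Hm τ q u p t, deriv u t⟫
        + ⟪dH4 Hm τ q u p t, deriv q (t - τ)⟫ + ⟪dH5 Hm τ q u p t, deriv u (t - τ)⟫
        + ⟪dH6 Hm τ q u p t, deriv p t⟫ = 0 := by
      rw [hA, hB, hC]
      simp only [inner_neg_right, inner_zero_left]
      have c1 : ⟪dH2 Hm τ q u p t, dH6 Hm τ q u p t⟫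
          = ⟪dH6 Hm τ q u p t, dH2 Hm τ q u p t⟫ := real_inner_comm _ _
      linarith [hE, c1]
    linarith [expand]


end
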